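/- Suppose ζ : ℝ₊ → ℝ₊ satisfies ζ(μ) > min{μ, √(μ₁μ)} for all μ > 0 with μ₁ = M⁴c⁸/(2Q⁶), and GM² < Q². Then the mass function m(r) = M - (1/c²)∫_r^∞ ζ(Q²/(2s⁴)) s² ds satisfies m(r) ≤ m₁(r) for all r > 0 (whenever the integral converges, allowing m(r) = -∞), and consequently m(r)/r < c²/(2G) for all r > 0. -/

import Mathlib

open Real MeasureTheory

set_option maxHeartbeats 1000000 in

/-- If `ζ : ℝ₊ → ℝ₊` dominates `ζ₁(μ) = min{μ, √(μ₁μ)}` pointwise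
(`μ₁ = M⁴c⁸/(2Q⁶)`) and `GM² < Q²`, then whenever the integral defining
`m(r) = M - (1/c²)∫_r^∞ ζ(Q²/(2s⁴)) s² ds` converges one has `m(r) ≤ m₁(r)`
and consequently `m(r)/r < c²/(2G)`. -/
theorem dominating_zeta_no_horizon (G c M Q μ₁ : ℝ) (hG : 0 < G) (hc : 0 < c)
    (hM : 0 < M) (hQ : 0 < Q) (hnoBH : G*M^2 < Q^2)
    (hμ₁ : μ₁ = M^4*c^8/(2*Q^6))
    (ζ ζ₁ : ℝ → ℝ) (m m₁ : ℝ → ℝ)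
    (hζnn : ∀ μ, 0 ≤ μ → 0 ≤ ζ μ)
    (hζ₁ : ∀ μ, ζ₁ μ = min μ (Real.sqrt (μ₁*μ)))
    (hdom : ∀ μ, 0 < μ → ζ₁ μ < ζ μ)
    (hm : ∀ r, m r = M - (1/c^2) * ∫ s in Set.Ioi r, ζ (Q^2/(2*s^4)) * s^2)
    (hm₁ : ∀ r, m₁ r = M - (1/c^2) * ∫ s in Set.Ioi r, ζ₁ (Q^2/(2*s^4)) * s^2) :
    ∀ r, 0 < r →
      IntegrableOn (fun s => ζ (Q^2/(2*s^4)) * s^2) (Set.Ioi r) →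
      m r ≤ m₁ r ∧ m r / r < c^2/(2*G) := by
  intro r hr hint
  set K : ℝ := M^2*c^4/(2*Q^2) with hKdef
  set r₁ : ℝ := Q^2/(M*c^2) with hr₁def
  have hKpos : 0 < K := by positivity
  have hr₁pos : 0 < r₁ := by positivity
  have hcne : c ≠ 0 := ne_of_gt hc
  have hQne : Q ≠ 0 := ne_of_gt hQ
  have hMne : M ≠ 0 := ne_of_gt hM
  -- explicit formula for the ζ₁ integrand
  have hF : ∀ s : ℝ, 0 < s → ζ₁ (Q^2/(2*s^4)) * s^2 = min (Q^2/(2*s^2)) K := by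
    intro s hs
    have hsne : s ≠ 0 := ne_of_gt hs
    rw [hζ₁]
    have h1 : μ₁ * (Q^2/(2*s^4)) = (K / s^2)^2 := by
      rw [hμ₁, hKdef]; field_simp
    rw [h1, Real.sqrt_sq (by positivity), min_mul_of_nonneg _ _ (sq_nonneg s)]
    congr 1
    · field_simp
    · field_simp
  have hζ₁fun : (fun s : ℝ => ζ₁ (Q^2/(2*s^4)) * s^2)
      = fun s => min (Q^2/(2*s^4)) (Real.sqrt (μ₁ * (Q^2/(2*s^4)))) * s^2 :=
    funext fun s => by rw [hζ₁]
  have hFmeas : Measurable (fun s : ℝ => ζ₁ (Q^2/(2*s^4)) * s^2) := by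
    rw [hζ₁fun]; fun_prop
  have hFnn : ∀ s : ℝ, 0 < s → 0 ≤ ζ₁ (Q^2/(2*s^4)) * s^2 := by
    intro s hs
    rw [hF s hs]
    exact le_min (by positivity) hKpos.le
  have hζ₁int : IntegrableOn (fun s => ζ₁ (Q^2/(2*s^4)) * s^2) (Set.Ioi r) := by
    refine hint.mono' hFmeas.aestronglyMeasurable ?_
    filter_upwards [ae_restrict_mem measurableSet_Ioi] with s hs
    have hs0 : 0 < s := hr.trans hs
    rw [Real.norm_eq_abs, abs_of_nonneg (hFnn s hs0)]
    exact mul_le_mul_of_nonneg_right (hdom _ (by positivity)).le (sq_nonneg s)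
  have hIle : ∫ s in Set.Ioi r, ζ₁ (Q^2/(2*s^4)) * s^2
      ≤ ∫ s in Set.Ioi r, ζ (Q^2/(2*s^4)) * s^2 := by
    refine setIntegral_mono_on hζ₁int hint measurableSet_Ioi fun s hs => ?_
    have hs0 : 0 < s := hr.trans hs
    exact mul_le_mul_of_nonneg_right (hdom _ (by positivity)).le (sq_nonneg s)
  have hmle : m r ≤ m₁ r := by
    rw [hm, hm₁]
    have := mul_le_mul_of_nonneg_left hIle (by positivity : (0:ℝ) ≤ 1/c^2)
    linarith
  refine ⟨hmle, ?_⟩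
  -- choose a large cutoff R
  set α : ℝ := c^2/(2*G) - M^2*c^2/(2*Q^2) with hαdef
  have hαpos : 0 < α := by
    rw [hαdef, sub_pos, div_lt_div_iff₀ (by positivity) (by positivity)]
    nlinarith [mul_lt_mul_of_pos_left hnoBH (show (0:ℝ) < 2*c^2 by positivity)]
  set β : ℝ := Q^2/(2*c^2*r*α) with hβdef
  have hβpos : 0 < β := by positivity
  set R : ℝ := max (max r r₁) β + 1 with hRdef
  have hrR : r < R := by
    have : r ≤ max (max r r₁) β := le_trans (le_max_left _ _) (le_max_left _ _)
    linarith
  have hr₁R : r₁ ≤ R := by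
    have : r₁ ≤ max (max r r₁) β := le_trans (le_max_right _ _) (le_max_left _ _)
    linarith
  have hβR : β < R := by
    have : β ≤ max (max r r₁) β := le_max_right _ _
    linarith
  have hRpos : 0 < R := hr.trans hrR
  have hV : Q^2/(2*R) < r*α*c^2 := by
    have h1 : Q^2/(2*R) < Q^2/(2*β) := by
      apply div_lt_div_of_pos_left (by positivity) (by positivity)
      linarith
    have h2 : Q^2/(2*β) = r*α*c^2 := by
      rw [hβdef]; field_simp
    linarith
  -- continuity of the ζ₁ integrand on (0,∞)
  have hFcont : ContinuousOn (fun s : ℝ => ζ₁ (Q^2/(2*s^4)) * s^2) (Set.Ioi 0) := by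
    rw [hζ₁fun]
    apply ContinuousOn.mul
    · apply ContinuousOn.inf
      · exact continuousOn_const.div (by fun_prop) (fun s hs => by
          simp only [Set.mem_Ioi] at hs; positivity)
      · exact Real.continuous_sqrt.comp_continuousOn
          (continuousOn_const.mul (continuousOn_const.div (by fun_prop) (fun s hs => by
            simp only [Set.mem_Ioi] at hs; positivity)))
    · exact (continuous_pow 2).continuousOn
  -- antiderivative computation
  have hinv : ∀ a b : ℝ, 0 < a → a ≤ b →
      ∫ s in a..b, Q^2/(2*s^2) = Q^2/(2*a) - Q^2/(2*b) := by
    intro a b ha hab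
    have hD : ∀ s ∈ Set.uIcc a b, HasDerivAt (fun x => -(Q^2/2) * x⁻¹) (Q^2/(2*s^2)) s := by
      intro s hs
      rw [Set.uIcc_of_le hab] at hs
      have hs0 : 0 < s := lt_of_lt_of_le ha hs.1
      have h : HasDerivAt (fun x => -(Q^2/2) * x⁻¹) (-(Q^2/2) * -(s^2)⁻¹) s :=
        (hasDerivAt_inv hs0.ne').const_mul (-(Q^2/2))
      convert h using 1
      ring
    have hcont : IntervalIntegrable (fun s => Q^2/(2*s^2)) volume a b := by
      apply ContinuousOn.intervalIntegrable
      apply continuousOn_const.div (by fun_prop)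
      intro s hs
      rw [Set.uIcc_of_le hab] at hs
      have hs0 : 0 < s := lt_of_lt_of_le ha hs.1
      positivity
    rw [intervalIntegral.integral_eq_sub_of_hasDerivAt hD hcont]
    field_simp
    ring
  -- lower bound for the ζ integral via the interval [r,R]
  have hIocle : ∫ s in Set.Ioc r R, ζ₁ (Q^2/(2*s^4)) * s^2
      ≤ ∫ s in Set.Ioi r, ζ₁ (Q^2/(2*s^4)) * s^2 := by
    apply setIntegral_mono_set hζ₁int
    · filter_upwards [ae_restrict_mem measurableSet_Ioi] with s hs
      exact hFnn s (hr.trans hs)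
    · exact (Set.Ioc_subset_Ioi_self).eventuallyLE
  have hIoc_eq : ∫ s in Set.Ioc r R, ζ₁ (Q^2/(2*s^4)) * s^2
      = ∫ s in r..R, ζ₁ (Q^2/(2*s^4)) * s^2 :=
    (intervalIntegral.integral_of_le hrR.le).symm
  -- the main estimate
  have hmain : M*c^2 - K*r - Q^2/(2*R) ≤ ∫ s in r..R, ζ₁ (Q^2/(2*s^4)) * s^2 := by
    rcases le_total r r₁ with hcase | hcase
    · -- r ≤ r₁ : split at r₁
      have hsub1 : Set.uIcc r r₁ ⊆ Set.Ioi 0 := by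
        rw [Set.uIcc_of_le hcase]; exact fun s hs => lt_of_lt_of_le hr hs.1
      have hsub2 : Set.uIcc r₁ R ⊆ Set.Ioi 0 := by
        rw [Set.uIcc_of_le hr₁R]; exact fun s hs => lt_of_lt_of_le hr₁pos hs.1
      have hii1 : IntervalIntegrable (fun s => ζ₁ (Q^2/(2*s^4)) * s^2) volume r r₁ :=
        (hFcont.mono hsub1).intervalIntegrable
      have hii2 : IntervalIntegrable (fun s => ζ₁ (Q^2/(2*s^4)) * s^2) volume r₁ R :=
        (hFcont.mono hsub2).intervalIntegrable
      have hsplit := intervalIntegral.integral_add_adjacent_intervals hii1 hii2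
      have hval1 : ∫ s in r..r₁, ζ₁ (Q^2/(2*s^4)) * s^2 = K*(r₁ - r) := by
        rw [intervalIntegral.integral_congr (g := fun _ => K) ?_]
        · rw [intervalIntegral.integral_const, smul_eq_mul]; ring
        intro s hs
        rw [Set.uIcc_of_le hcase] at hs
        have hs0 : 0 < s := lt_of_lt_of_le hr hs.1
        show ζ₁ (Q^2/(2*s^4)) * s^2 = K
        rw [hF s hs0, min_eq_right]
        have hsr₁ : s * (M*c^2) ≤ Q^2 := by
          have := hs.2
          rw [hr₁def, le_div_iff₀ (by positivity)] at this
          linarith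
        have h3 : (s*(M*c^2))^2 ≤ (Q^2)^2 := pow_le_pow_left₀ (by positivity) hsr₁ 2
        rw [hKdef, le_div_iff₀ (by positivity), div_mul_eq_mul_div, div_le_iff₀ (by positivity)]
        nlinarith
      have hval2 : ∫ s in r₁..R, ζ₁ (Q^2/(2*s^4)) * s^2 = Q^2/(2*r₁) - Q^2/(2*R) := by
        rw [intervalIntegral.integral_congr (g := fun s => Q^2/(2*s^2)) ?_]
        · exact hinv r₁ R hr₁pos hr₁R
        intro s hs
        rw [Set.uIcc_of_le hr₁R] at hs
        have hs0 : 0 < s := lt_of_lt_of_le hr₁pos hs.1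
        show ζ₁ (Q^2/(2*s^4)) * s^2 = Q^2/(2*s^2)
        rw [hF s hs0, min_eq_left]
        have hsr₁ : Q^2 ≤ s * (M*c^2) := by
          have := hs.1
          rw [hr₁def, div_le_iff₀ (by positivity)] at this
          linarith
        have h3 : (Q^2)^2 ≤ (s*(M*c^2))^2 := pow_le_pow_left₀ (by positivity) hsr₁ 2
        rw [hKdef, div_le_div_iff₀ (by positivity) (by positivity)]
        nlinarith
      have heq : K*(r₁ - r) + (Q^2/(2*r₁) - Q^2/(2*R)) = M*c^2 - K*r - Q^2/(2*R) := by
        rw [hKdef, hr₁def]; field_simp; ring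
      rw [← hsplit, hval1, hval2]
      linarith [heq.ge]
    · -- r₁ ≤ r : single piece
      have hval : ∫ s in r..R, ζ₁ (Q^2/(2*s^4)) * s^2 = Q^2/(2*r) - Q^2/(2*R) := by
        rw [intervalIntegral.integral_congr (g := fun s => Q^2/(2*s^2)) ?_]
        · exact hinv r R hr hrR.le
        intro s hs
        rw [Set.uIcc_of_le hrR.le] at hs
        have hs0 : 0 < s := lt_of_lt_of_le hr hs.1
        show ζ₁ (Q^2/(2*s^4)) * s^2 = Q^2/(2*s^2)
        rw [hF s hs0, min_eq_left]
        have hsr₁ : Q^2 ≤ s * (M*c^2) := by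
          have h1 : r₁ ≤ s := le_trans hcase hs.1
          rw [hr₁def, div_le_iff₀ (by positivity)] at h1
          linarith
        have h3 : (Q^2)^2 ≤ (s*(M*c^2))^2 := pow_le_pow_left₀ (by positivity) hsr₁ 2
        rw [hKdef, div_le_div_iff₀ (by positivity) (by positivity)]
        nlinarith
      rw [hval]
      -- need Mc² - Kr - Q²/(2R) ≤ Q²/(2r) - Q²/(2R), i.e. Mc² - Kr ≤ Q²/(2r)
      have key : M*c^2 - K*r ≤ Q^2/(2*r) := by
        have h : Q^2/(2*r) - (M*c^2 - K*r) = (M*c^2*r - Q^2)^2/(2*r*Q^2) := by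
          rw [hKdef]; field_simp; ring
        have h2 := div_nonneg (sq_nonneg (M*c^2*r - Q^2))
          (by positivity : (0:ℝ) ≤ 2*r*Q^2)
        linarith
      linarith
  -- combine
  have hlow : M*c^2 - K*r - Q^2/(2*R) ≤ ∫ s in Set.Ioi r, ζ (Q^2/(2*s^4)) * s^2 := by
    calc M*c^2 - K*r - Q^2/(2*R) ≤ ∫ s in r..R, ζ₁ (Q^2/(2*s^4)) * s^2 := hmain
    _ = ∫ s in Set.Ioc r R, ζ₁ (Q^2/(2*s^4)) * s^2 := hIoc_eq.symm
    _ ≤ ∫ s in Set.Ioi r, ζ₁ (Q^2/(2*s^4)) * s^2 := hIocle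
    _ ≤ _ := hIle
  rw [hm, div_lt_iff₀ hr]
  have e3 : K*r/c^2 = c^2/(2*G)*r - r*α := by
    rw [hαdef, hKdef]; field_simp; ring
  have e4 : (Q^2/(2*R))/c^2 < r*α := by
    rw [div_lt_iff₀ (by positivity : (0:ℝ) < c^2)]
    linarith [hV]
  have e5 : M - 1/c^2*(M*c^2 - K*r - Q^2/(2*R)) = K*r/c^2 + (Q^2/(2*R))/c^2 := by
    field_simp; ring
  have e6 : 1/c^2 * (M*c^2 - K*r - Q^2/(2*R)) ≤ 1/c^2 * ∫ s in Set.Ioi r, ζ (Q^2/(2*s^4)) * s^2 :=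
    mul_le_mul_of_nonneg_left hlow (by positivity)
  linarith [e3, e4, e5, e6]
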